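/- Let X be a finite set, Θ ⊆ ℝ^m open, and θ ↦ p_θ a twice continuously differentiable family of strictly positive probability distributions on X. Fix α > 0, α ≠ 1. Then for all i, j and all θ ∈ Θ, the Eguchi metric of the I_α-divergence equals the escort covariance of the score: −(∂/∂θ'_j)(∂/∂θ_i) I_α(p_θ, p_{θ'}) evaluated at θ' = θ equals Cov_{p_θ^{(α)}}[∂_i log p_θ(X), ∂_j log p_θ(X)]. -/

import Mathlib

open scoped BigOperators Topology Matrix
open Real MeasureTheory

noncomputable section

/-- Expectation of `A` under the weight/distribution `p` on a finite set. -/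
def expct {X : Type*} [Fintype X] (p A : X → ℝ) : ℝ := ∑ x, p x * A x

/-- Covariance of `A` and `B` under `p`. -/
def covf {X : Type*} [Fintype X] (p A B : X → ℝ) : ℝ :=
  (∑ x, p x * A x * B x) - (∑ x, p x * A x) * (∑ x, p x * B x)

/-- Variance of `A` under `p`: `E_p[(A - E_p A)^2]`. -/
def varE {X : Type*} [Fintype X] (p A : X → ℝ) : ℝ :=
  ∑ x, p x * (A x - expct p A) ^ 2

/-- The α-escort distribution of `p`. -/
def escort {X : Type*} [Fintype X] (α : ℝ) (p : X → ℝ) : X → ℝ :=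
  fun x => p x ^ α / ∑ y, p y ^ α

/-- Partial derivative in the `i`-th coordinate direction. -/
def pderiv {m : ℕ} (i : Fin m) (f : (Fin m → ℝ) → ℝ) (θ : Fin m → ℝ) : ℝ :=
  fderiv ℝ f θ (Pi.single i 1)

/-- Covariance matrix of a vector-valued map `A` under `p`. -/
def covMatrix {X : Type*} [Fintype X] {m : ℕ} (p : X → ℝ) (A : X → Fin m → ℝ) :
    Matrix (Fin m) (Fin m) ℝ :=
  Matrix.of fun i j => covf p (fun x => A x i) (fun x => A x j)

/-- The α-information matrix `G^{(α)}(θ)`. -/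
def Galpha {X : Type*} [Fintype X] {m : ℕ} (α : ℝ) (p : (Fin m → ℝ) → X → ℝ)
    (θ : Fin m → ℝ) : Matrix (Fin m) (Fin m) ℝ :=
  Matrix.of fun i j =>
    covf (escort α (p θ)) (fun x => pderiv i (fun t => Real.log (p t x)) θ)
      (fun x => pderiv j (fun t => Real.log (p t x)) θ)

/-- The I_α-divergence (relative α-entropy). -/
def Ialpha {X : Type*} [Fintype X] (α : ℝ) (p q : X → ℝ) : ℝ :=
  (1 / (1 - α)) * Real.log (∑ x, p x * q x ^ (α - 1))
    + (1 / α) * Real.log (∑ x, q x ^ α)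
    - (1 / (α * (1 - α))) * Real.log (∑ x, p x ^ α)

/-- Generalized KL-divergence between positive measures on a finite set. -/
def genKL {X : Type*} [Fintype X] (pt qt : X → ℝ) : ℝ :=
  ∑ x, pt x * Real.log (pt x / qt x) - ∑ x, pt x + ∑ x, qt x

/-- The Fisher information matrix `G^{(e)}(θ)`. -/
def GeMat {X : Type*} [Fintype X] {k : ℕ} (p : (Fin k → ℝ) → X → ℝ) (θ : Fin k → ℝ) :
    Matrix (Fin k) (Fin k) ℝ :=
  Matrix.of fun i j =>
    ∑ x, p θ x * pderiv i (fun t => Real.log (p t x)) θ * pderiv j (fun t => Real.log (p t x)) θ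

/-- The prior matrix `J^λ(θ)` with entries `∂_i log λ · ∂_j log λ`. -/
def Jmat {k : ℕ} (lam : (Fin k → ℝ) → ℝ) (θ : Fin k → ℝ) : Matrix (Fin k) (Fin k) ℝ :=
  Matrix.of fun i j =>
    pderiv i (fun t => Real.log (lam t)) θ * pderiv j (fun t => Real.log (lam t)) θ

/-- The generalized Fisher matrix `G^{(f,F)}(θ)` of the escort model. -/
def GFF {X : Type*} [Fintype X] {k : ℕ} (F : ℝ → ℝ) (p : (Fin k → ℝ) → X → ℝ)
    (θ : Fin k → ℝ) : Matrix (Fin k) (Fin k) ℝ :=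
  Matrix.of fun i j =>
    ∑ x, F (p θ x) * pderiv i (fun t => Real.log (F (p t x))) θ
      * pderiv j (fun t => Real.log (F (p t x))) θ

/-- The generalized f-divergence `D_f^{(F)}(p,q)`. -/
def genDiv {X : Type*} [Fintype X] (f F : ℝ → ℝ) (p q : X → ℝ) : ℝ :=
  (1 / deriv (deriv f) 1) * ∑ x, F (q x) * f (F (p x) / F (q x))

/-- The Bayesian I_α-divergence between `λ·p` and `μ·q`. -/
def IalphaB {X : Type*} [Fintype X] (α lam mu : ℝ) (p q : X → ℝ) : ℝ :=
  lam * Ialpha α p q + lam * Real.log (lam / mu) - lam + mu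

/-- The open-simplex parametrization of distributions on a set with `d+1` points. -/
def simplexFam (d : ℕ) (θ : Fin d → ℝ) : Fin (d + 1) → ℝ :=
  fun x => if h : (x : ℕ) < d then θ ⟨x, h⟩ else 1 - ∑ i, θ i

/-- the Eguchi metric of the I_α-divergence is the escort covariance
of the score. -/
theorem eguchi_metric_Ialpha {X : Type*} [Fintype X] {m : ℕ}
    (Θ : Set (Fin m → ℝ)) (hΘ : IsOpen Θ)
    (p : (Fin m → ℝ) → X → ℝ)
    (hsmooth : ∀ x, ContDiffOn ℝ 2 (fun θ => p θ x) Θ)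
    (hpos : ∀ θ ∈ Θ, ∀ x, 0 < p θ x)
    (hsum : ∀ θ ∈ Θ, ∑ x, p θ x = 1)
    (α : ℝ) (hα : 0 < α) (hα1 : α ≠ 1) :
    ∀ θ ∈ Θ, ∀ i j : Fin m,
      -(pderiv j (fun θ' => pderiv i (fun t => Ialpha α (p t) (p θ')) θ) θ)
        = covf (escort α (p θ)) (fun x => pderiv i (fun t => Real.log (p t x)) θ)
            (fun x => pderiv j (fun t => Real.log (p t x)) θ) := by
  intro θ hθ i j
  have hXne : (Finset.univ : Finset X).Nonempty := by
    rw [Finset.univ_nonempty_iff]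
    by_contra h
    rw [not_nonempty_iff] at h
    have h1 := hsum θ hθ
    simp at h1
  have h1α : (1 : ℝ) - α ≠ 0 := sub_ne_zero.mpr (Ne.symm hα1)
  have hpθ := hpos θ hθ
  set D : X → ((Fin m → ℝ) →L[ℝ] ℝ) := fun x => fderiv ℝ (fun s => p s x) θ with hDdef
  have hD : ∀ x, HasFDerivAt (fun s => p s x) (D x) θ := by
    intro x
    have h2 := ((hsmooth x).contDiffAt (hΘ.mem_nhds hθ)).differentiableAt (by norm_num)
    exact h2.hasFDerivAt
  set u : X → ℝ := fun x => D x (Pi.single i 1) with hu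
  set v : X → ℝ := fun x => D x (Pi.single j 1) with hv
  have hu' : ∀ x, D x (Pi.single i 1) = u x := fun _ => rfl
  have hv' : ∀ x, D x (Pi.single j 1) = v x := fun _ => rfl
  set S : ℝ := ∑ x, (p θ x) ^ α with hSdef
  have hS : 0 < S := by
    rw [hSdef]; exact Finset.sum_pos (fun x _ => Real.rpow_pos_of_pos (hpθ x) α) hXne
  -- Claim A : inner derivative formula
  have claimA : ∀ θ' ∈ Θ, pderiv i (fun t => Ialpha α (p t) (p θ')) θ
      = 1/(1-α) * ((∑ x, p θ x * (p θ' x) ^ (α-1))⁻¹ * ∑ x, ((p θ' x) ^ (α-1)) * u x)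
        - 1/(α*(1-α)) * (S⁻¹ * ∑ x, (α * (p θ x) ^ (α-1)) * u x) := by
    intro θ' hθ'
    have hden : 0 < ∑ x, p θ x * (p θ' x) ^ (α-1) :=
      Finset.sum_pos (fun x _ => mul_pos (hpθ x) (Real.rpow_pos_of_pos (hpos θ' hθ' x) _)) hXne
    have h1 : HasFDerivAt (fun t => ∑ x, p t x * (p θ' x) ^ (α-1))
        (∑ x, ((p θ' x) ^ (α-1)) • D x) θ :=
      HasFDerivAt.fun_sum (fun x _ => (hD x).mul_const _)
    have h3 : HasFDerivAt (fun t => ∑ x, (p t x) ^ α)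
        (∑ x, ((α * (p θ x) ^ (α-1)) • D x)) θ :=
      HasFDerivAt.fun_sum (fun x _ => (hD x).rpow_const (Or.inl (hpθ x).ne'))
    have hIa : HasFDerivAt (fun t => Ialpha α (p t) (p θ'))
        (((1/(1-α)) • ((∑ x, p θ x * (p θ' x) ^ (α-1))⁻¹ • (∑ x, ((p θ' x) ^ (α-1)) • D x)))
          - ((1/(α*(1-α))) • (S⁻¹ • (∑ x, ((α * (p θ x) ^ (α-1)) • D x))))) θ := by
      have h4 := (((h1.log hden.ne').const_mul (1/(1-α))).add_const
          ((1/α) * Real.log (∑ x, (p θ' x) ^ α))).sub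
          ((h3.log hS.ne').const_mul (1/(α*(1-α))))
      simp only [Ialpha]
      rw [hSdef]
      exact h4
    unfold pderiv
    rw [hIa.fderiv]
    simp only [ContinuousLinearMap.coe_sub', Pi.sub_apply, ContinuousLinearMap.coe_smul',
      Pi.smul_apply, ContinuousLinearMap.coe_sum', Finset.sum_apply, smul_eq_mul, hu']
  -- the constant (in θ') part
  set c : ℝ := 1/(α*(1-α)) * (S⁻¹ * ∑ x, (α * (p θ x) ^ (α-1)) * u x) with hc
  set g : (Fin m → ℝ) → ℝ := fun θ' =>
    1/(1-α) * ((∑ x, p θ x * (p θ' x) ^ (α-1))⁻¹ * ∑ x, ((p θ' x) ^ (α-1)) * u x) - c with hg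
  have hEq : (fun θ' => pderiv i (fun t => Ialpha α (p t) (p θ')) θ) =ᶠ[𝓝 θ] g := by
    filter_upwards [hΘ.mem_nhds hθ] with θ' hθ' using claimA θ' hθ'
  have hfd : pderiv j (fun θ' => pderiv i (fun t => Ialpha α (p t) (p θ')) θ) θ
      = pderiv j g θ := by
    have h5 := hEq.fderiv_eq (𝕜 := ℝ)
    unfold pderiv at h5 ⊢
    rw [h5]
  rw [hfd]
  have r1 : ∀ x : X, p θ x * (p θ x) ^ (α-1) = (p θ x) ^ α := by
    intro x
    rw [Real.rpow_sub (hpθ x), Real.rpow_one, mul_comm, div_mul_cancel₀ _ (hpθ x).ne']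
  have hDenS : ∑ x, p θ x * (p θ x) ^ (α-1) = S := by
    rw [hSdef]; exact Finset.sum_congr rfl fun x _ => r1 x
  have hDen0 : (0:ℝ) < ∑ x, p θ x * (p θ x) ^ (α-1) := by rw [hDenS]; exact hS
  have hden' : HasFDerivAt (fun θ' => ∑ x, p θ x * (p θ' x) ^ (α-1))
      (∑ x, (p θ x) • (((α-1) * (p θ x) ^ (α-1-1)) • D x)) θ :=
    HasFDerivAt.fun_sum fun x _ => ((hD x).rpow_const (Or.inl (hpθ x).ne')).const_mul (p θ x)
  have hnum' : HasFDerivAt (fun θ' => ∑ x, ((p θ' x) ^ (α-1)) * u x)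
      (∑ x, (u x) • (((α-1) * (p θ x) ^ (α-1-1)) • D x)) θ :=
    HasFDerivAt.fun_sum fun x _ => ((hD x).rpow_const (Or.inl (hpθ x).ne')).mul_const (u x)
  have hinv : HasFDerivAt (fun θ' => (∑ x, p θ x * (p θ' x) ^ (α-1))⁻¹)
      ((-((∑ x, p θ x * (p θ x) ^ (α-1)) ^ 2)⁻¹)
        • (∑ x, (p θ x) • (((α-1) * (p θ x) ^ (α-1-1)) • D x))) θ :=
    (hasDerivAt_inv hDen0.ne').comp_hasFDerivAt θ hden'
  have hgd : HasFDerivAt g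
      ((1/(1-α)) • (((∑ x, p θ x * (p θ x) ^ (α-1))⁻¹
          • (∑ x, (u x) • (((α-1) * (p θ x) ^ (α-1-1)) • D x)))
        + (∑ x, ((p θ x) ^ (α-1)) * u x) • ((-((∑ x, p θ x * (p θ x) ^ (α-1)) ^ 2)⁻¹)
          • (∑ x, (p θ x) • (((α-1) * (p θ x) ^ (α-1-1)) • D x))))) θ := by
    rw [hg]
    exact ((hinv.mul hnum').const_mul (1/(1-α))).sub_const c
  have hgval : pderiv j g θ
      = 1/(1-α) * (S⁻¹ * ∑ x, u x * ((α-1) * (p θ x) ^ (α-1-1) * v x)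
        + (∑ x, ((p θ x) ^ (α-1)) * u x)
          * (-(S ^ 2)⁻¹ * ∑ x, p θ x * ((α-1) * (p θ x) ^ (α-1-1) * v x))) := by
    unfold pderiv
    rw [hgd.fderiv, hDenS]
    simp only [ContinuousLinearMap.coe_smul', Pi.smul_apply, ContinuousLinearMap.add_apply,
      ContinuousLinearMap.coe_sum', Finset.sum_apply, smul_eq_mul, hv']
  rw [hgval]
  -- score functions
  have hscore_i : ∀ x, pderiv i (fun t => Real.log (p t x)) θ = (p θ x)⁻¹ * u x := by
    intro x
    unfold pderiv
    rw [((hD x).log (hpθ x).ne').fderiv]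
    simp [hu']
  have hscore_j : ∀ x, pderiv j (fun t => Real.log (p t x)) θ = (p θ x)⁻¹ * v x := by
    intro x
    unfold pderiv
    rw [((hD x).log (hpθ x).ne').fderiv]
    simp [hv']
  simp only [covf, escort, hscore_i, hscore_j]
  set A : ℝ := ∑ x, p θ x ^ α * ((p θ x)⁻¹ * u x) * ((p θ x)⁻¹ * v x) with hA
  set B : ℝ := ∑ x, p θ x ^ α * ((p θ x)⁻¹ * u x) with hB
  set C : ℝ := ∑ x, p θ x ^ α * ((p θ x)⁻¹ * v x) with hC
  rw [← hSdef]
  have hp' : ∀ x : X, p θ x ≠ 0 := fun x => (hpθ x).ne'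
  have r2 : ∀ x : X, (p θ x) ^ (α-1) = (p θ x) ^ α * (p θ x)⁻¹ := by
    intro x
    rw [Real.rpow_sub (hpθ x), Real.rpow_one, div_eq_mul_inv]
  have r3 : ∀ x : X, (p θ x) ^ (α-1-1) = (p θ x) ^ α * (p θ x)⁻¹ * (p θ x)⁻¹ := by
    intro x
    rw [Real.rpow_sub (hpθ x), Real.rpow_sub (hpθ x), Real.rpow_one, div_eq_mul_inv,
      div_eq_mul_inv]
  have eL1 : ∑ x, u x * ((α - 1) * p θ x ^ (α - 1 - 1) * v x) = (α-1) * A := by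
    rw [hA, Finset.mul_sum]
    refine Finset.sum_congr rfl fun x _ => ?_
    rw [r3 x]; ring
  have eL2 : ∑ x, p θ x ^ (α - 1) * u x = B := by
    rw [hB]
    refine Finset.sum_congr rfl fun x _ => ?_
    rw [r2 x]; ring
  have eL3 : ∑ x, p θ x * ((α - 1) * p θ x ^ (α - 1 - 1) * v x) = (α-1) * C := by
    rw [hC, Finset.mul_sum]
    refine Finset.sum_congr rfl fun x _ => ?_
    rw [r3 x, show p θ x * ((α - 1) * (p θ x ^ α * (p θ x)⁻¹ * (p θ x)⁻¹) * v x)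
        = (p θ x * (p θ x)⁻¹) * ((α - 1) * (p θ x ^ α * ((p θ x)⁻¹ * v x))) from by ring,
      mul_inv_cancel₀ (hp' x), one_mul]
  have eR1 : ∑ x, (p θ x ^ α / S) * ((p θ x)⁻¹ * u x) * ((p θ x)⁻¹ * v x) = S⁻¹ * A := by
    rw [hA, Finset.mul_sum]
    refine Finset.sum_congr rfl fun x _ => ?_
    rw [div_eq_mul_inv]; ring
  have eR2 : ∑ x, (p θ x ^ α / S) * ((p θ x)⁻¹ * u x) = S⁻¹ * B := by
    rw [hB, Finset.mul_sum]
    refine Finset.sum_congr rfl fun x _ => ?_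
    rw [div_eq_mul_inv]; ring
  have eR3 : ∑ x, (p θ x ^ α / S) * ((p θ x)⁻¹ * v x) = S⁻¹ * C := by
    rw [hC, Finset.mul_sum]
    refine Finset.sum_congr rfl fun x _ => ?_
    rw [div_eq_mul_inv]; ring
  rw [eL1, eL2, eL3, eR1, eR2, eR3]
  field_simp
  ring
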